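/- Let L be a λ-theory satisfying β-equality. There is a fully faithful functor F from the category of retracts R of L to the category Pshf L of L-presheaves such that F(U) is isomorphic to the theory presheaf L, where U = λx₁.x₁ is the reflexive object of R; F is the composite of the equivalence R ≃ Karoubi(𝐌M₁) (induced by the monoid isomorphism ρ/λ between η-terms of L₀ and L₁), the embedding of the Karoubi envelope into presheaves on 𝐌M₁ as retracts of representables, and the equivalence of presheaves on 𝐌M₁ with Pshf L. -/

import Mathlib

/-- An (untyped) λ-theory satisfying β-equality (Def. 2.1/2.4 of the paper):
an algebraic theory `T` with abstraction `abs` (written `λₙ` in the paper) and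
application-transpose `rho` (written `ρₙ`), compatible with substitution, and
satisfying β-equality `ρₙ ∘ λₙ = id`. -/
structure LamTh where
  T : ℕ → Type
  xv : ∀ n, Fin n → T n
  subst : ∀ {m n}, T m → (Fin m → T n) → T n
  subst_xv : ∀ {m n} (j : Fin m) (g : Fin m → T n), subst (xv m j) g = g j
  subst_id : ∀ {m} (f : T m), subst f (xv m) = f
  subst_assoc : ∀ {l m n} (f : T l) (g : Fin l → T m) (h : Fin m → T n),
      subst (subst f g) h = subst f fun i => subst (g i) h
  abs : ∀ {n}, T (n + 1) → T n
  rho : ∀ {n}, T n → T (n + 1)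
  abs_subst : ∀ {m n} (f : T (m + 1)) (h : Fin m → T n),
      subst (abs f) h =
        abs (subst f (Fin.snoc (fun i => subst (h i) fun j => xv (n + 1) j.castSucc)
          (xv (n + 1) (Fin.last n))))
  rho_subst : ∀ {m n} (g : T m) (h : Fin m → T n),
      rho (subst g h) =
        subst (rho g) (Fin.snoc (fun i => subst (h i) fun j => xv (n + 1) j.castSucc)
          (xv (n + 1) (Fin.last n)))
  beta : ∀ {n} (f : T (n + 1)), rho (abs f) = f

namespace LamTh

variable (L : LamTh)

/-- Weakening `ι_{n,1} : T n → T (n+1)`. -/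
def wk {n : ℕ} (f : L.T n) : L.T (n + 1) :=
  L.subst f fun j => L.xv (n + 1) j.castSucc

/-- Weakening of a constant `ι_{0,n} : T 0 → T n`. -/
def wk0 {n : ℕ} (a : L.T 0) : L.T n :=
  L.subst a Fin.elim0

/-- Application `f g := ρ(x_{1,1}) • (f, g)` (Def. 2.12/Rem. 2.13). -/
def appT {n : ℕ} (f g : L.T n) : L.T n :=
  L.subst (L.rho (L.xv 1 0)) ![f, g]

/-- Composition of terms, `a ∘ b := λ x. a (b x)`. -/
def compT {n : ℕ} (f g : L.T n) : L.T n :=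
  L.abs (L.appT (L.wk f) (L.appT (L.wk g) (L.xv (n + 1) (Fin.last n))))

/-- `a ∘ b` for constants. -/
def comp (a b : L.T 0) : L.T 0 := L.compT a b

/-- Pairing `(s, t) := λ x. x s t`. -/
def pairT {n : ℕ} (s t : L.T n) : L.T n :=
  L.abs (L.appT (L.appT (L.xv (n + 1) (Fin.last n)) (L.wk s)) (L.wk t))

/-- Pairing of morphisms, `⟨f, g⟩ := λ x. (f x, g x)`. -/
def pairMor (f g : L.T 0) : L.T 0 :=
  L.abs (L.pairT (L.appT (L.wk f) (L.xv 1 0)) (L.appT (L.wk g) (L.xv 1 0)))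

/-- First projection `π₁ = λ x₁. x₁ (λ x₂ x₃. x₂)`. -/
def pi1 : L.T 0 := L.abs (L.appT (L.xv 1 0) (L.abs (L.abs (L.xv 3 1))))

/-- Second projection `π₂ = λ x₁. x₁ (λ x₂ x₃. x₃)`. -/
def pi2 : L.T 0 := L.abs (L.appT (L.xv 1 0) (L.abs (L.abs (L.xv 3 2))))

/-- The reflexive object `U = λ x₁. x₁` of the category of retracts. -/
def UU : L.T 0 := L.abs (L.xv 1 0)

/-- The terminal object `I = λ x₁ x₂. x₂`. -/
def Iterm : L.T 0 := L.abs (L.abs (L.xv 2 1))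

/-- `f` is a morphism `A → B` in the category of retracts `R`:
`B ∘ f = f = f ∘ A`. -/
def IsRMor (A B f : L.T 0) : Prop := L.comp B f = f ∧ L.comp f A = f

/-- `A` is an object of the category of retracts `R`: `A ∘ A = A`. -/
def IsRObj (A : L.T 0) : Prop := L.comp A A = A

/-- `π_{n,i} = π₂ ∘ π₁^{n-i}` (with `i` 0-indexed here, so `π₂ ∘ π₁^{n-1-i}`). -/
def piProj (n : ℕ) (i : Fin n) : L.T 0 :=
  (fun t => L.comp t L.pi1)^[n - 1 - (i : ℕ)] L.pi2

/-- `⟨a₁, …, aₙ⟩ = ⟨⟨…⟨⟨λx.x, a₁⟩, a₂⟩…⟩, aₙ⟩`, the tupling of morphisms. -/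
def tupleMor : ∀ {n : ℕ}, (Fin n → L.T 0) → L.T 0
  | 0, _ => L.UU
  | n + 1, g => L.pairMor (tupleMor fun i => g i.castSucc) (g (Fin.last n))

/-- The `n`-fold product `Uⁿ = ⟨π_{n,i}⟩ᵢ` of `U` in `R`. -/
def Upow (n : ℕ) : L.T 0 := L.tupleMor fun i : Fin n => L.piProj n i

/-- The binary product object `A₁ × A₂ = ⟨A₁ ∘ π₁, A₂ ∘ π₂⟩` in `R`. -/
def prodObj (A₁ A₂ : L.T 0) : L.T 0 :=
  L.pairMor (L.comp A₁ L.pi1) (L.comp A₂ L.pi2)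

/-- The exponential object `C^B = λ x₁. C ∘ x₁ ∘ B` in `R`. -/
def expObj (B C : L.T 0) : L.T 0 :=
  L.abs (L.compT (L.compT (L.wk0 C) (L.xv 1 0)) (L.wk0 B))

end LamTh

open CategoryTheory

/-- A presheaf for the λ-theory `L`: a family of sets with actions
`• : P m × (L n)^m → P n` satisfying the presheaf axioms. -/
structure Pshf (L : LamTh) where
  P : ℕ → Type
  act : ∀ {m n}, P m → (Fin m → L.T n) → P n
  act_id : ∀ {m} (p : P m), act p (L.xv m) = p
  act_assoc : ∀ {l m n} (p : P l) (f : Fin l → L.T m) (g : Fin m → L.T n),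
      act (act p f) g = act p fun i => L.subst (f i) g

/-- A morphism of `L`-presheaves. -/
structure PshfHom {L : LamTh} (P Q : Pshf L) where
  map : ∀ n, P.P n → Q.P n
  comm : ∀ {m n} (p : P.P m) (t : Fin m → L.T n), map n (P.act p t) = Q.act (map m p) t

theorem PshfHom.ext' {L : LamTh} {P Q : Pshf L} {f g : PshfHom P Q}
    (h : f.map = g.map) : f = g := by
  obtain ⟨fm, fc⟩ := f; obtain ⟨gm, gc⟩ := g; cases h; rfl

/-- The category `Pshf L` of `L`-presheaves. -/
instance pshfCategory (L : LamTh) : Category (Pshf L) where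
  Hom := PshfHom
  id P := ⟨fun _ p => p, fun _ _ => rfl⟩
  comp f g := ⟨fun n p => g.map n (f.map n p), fun p t => by
    try dsimp only
    rw [f.comm, g.comm]⟩
  id_comp _ := PshfHom.ext' rfl
  comp_id _ := PshfHom.ext' rfl
  assoc _ _ _ := PshfHom.ext' rfl

/-- The theory presheaf: `L` acting on itself by substitution. -/
def theoryPshf (L : LamTh) : Pshf L where
  P := L.T
  act := L.subst
  act_id := L.subst_id
  act_assoc := L.subst_assoc

namespace LamTh

variable (L : LamTh)

lemma fin0_eq {α : Sort*} (f g : Fin 0 → α) : f = g := funext fun i => i.elim0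

lemma subst_wk0 {n k : ℕ} (a : L.T 0) (h : Fin n → L.T k) :
    L.subst (L.wk0 a) h = L.wk0 a := by
  unfold wk0
  rw [L.subst_assoc]
  congr 1
  exact fin0_eq _ _

lemma wk_eq_wk0 (a : L.T 0) : L.wk a = L.wk0 a := by
  unfold wk wk0
  congr 1
  exact fin0_eq _ _

lemma subst_app {m n : ℕ} (u v : L.T m) (h : Fin m → L.T n) :
    L.subst (L.appT u v) h = L.appT (L.subst u h) (L.subst v h) := by
  unfold appT
  rw [L.subst_assoc]
  congr 1
  funext i
  fin_cases i <;> simp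

lemma fin1_eq {α : Sort*} (f g : Fin 1 → α) (h : f 0 = g 0) : f = g := by
  funext i
  fin_cases i
  exact h

lemma subst_one {n : ℕ} (s : L.T 1) (t : L.T n) :
    L.subst s ![t] = L.subst s fun _ => t := by
  congr 1
  exact fin1_eq _ _ rfl

lemma app_abs {n : ℕ} (s : L.T 1) (t : L.T n) :
    L.appT (L.wk0 (L.abs s)) t = L.subst s ![t] := by
  have h1 : L.rho (L.abs s) =
      L.subst (L.rho (L.xv 1 0)) (Fin.snoc (fun i : Fin 1 =>
        L.subst ((![L.abs s] : Fin 1 → L.T 0) i) fun j : Fin 0 => L.xv 1 j.castSucc)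
        (L.xv 1 (Fin.last 0))) := by
    rw [← L.rho_subst (L.xv 1 0) ![L.abs s], L.subst_xv]
    rfl
  have h2 : s = L.subst (L.rho (L.xv 1 0)) (Fin.snoc (fun i : Fin 1 =>
      L.subst ((![L.abs s] : Fin 1 → L.T 0) i) fun j : Fin 0 => L.xv 1 j.castSucc)
        (L.xv 1 (Fin.last 0))) := by
    rw [← h1, L.beta]
  unfold appT
  conv_rhs => rw [h2, L.subst_assoc]
  congr 1
  funext i
  fin_cases i
  · simp only [Fin.mk_zero]
    have : (Fin.snoc (fun i : Fin 1 =>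
        L.subst ((![L.abs s] : Fin 1 → L.T 0) i) fun j : Fin 0 => L.xv 1 j.castSucc)
        (L.xv 1 (Fin.last 0)) : Fin 2 → L.T 1) 0 =
        L.subst (L.abs s) fun j : Fin 0 => L.xv 1 j.castSucc := by
      simp [Fin.snoc]
    rw [this, L.subst_assoc]
    have : L.wk0 (L.abs s) = L.subst (L.abs s)
        (fun i : Fin 0 => L.subst (L.xv 1 i.castSucc) ![t]) := by
      unfold wk0; congr 1; exact fin0_eq _ _
    rw [this]
    simp
  · simp only [Fin.mk_one]
    have : (Fin.snoc (fun i : Fin 1 =>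
        L.subst ((![L.abs s] : Fin 1 → L.T 0) i) fun j : Fin 0 => L.xv 1 j.castSucc)
        (L.xv 1 (Fin.last 0)) : Fin 2 → L.T 1) 1 = L.xv 1 (Fin.last 0) := by
      simp [Fin.snoc]
    rw [this, L.subst_xv]
    simp

lemma comp_app {n : ℕ} (a b : L.T 0) (t : L.T n) :
    L.appT (L.wk0 (L.comp a b)) t = L.appT (L.wk0 a) (L.appT (L.wk0 b) t) := by
  show L.appT (L.wk0 (L.abs _)) t = _
  rw [app_abs, subst_app, subst_app, L.wk_eq_wk0, L.wk_eq_wk0,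
    L.subst_wk0, L.subst_wk0, L.subst_xv]
  simp

end LamTh

namespace LamTh

variable (L : LamTh)

/-- membership is preserved by the action -/
lemma mem_act {n k : ℕ} (A : L.T 0) (t : L.T n) (ht : L.appT (L.wk0 A) t = t)
    (h : Fin n → L.T k) : L.appT (L.wk0 A) (L.subst t h) = L.subst t h := by
  conv_lhs => rw [← L.subst_wk0 A h, ← L.subst_app, ht]

lemma comp_eq_abs (a b : L.T 0) :
    L.comp a b = L.abs (L.appT (L.wk0 a) (L.appT (L.wk0 b) (L.xv 1 (Fin.last 0)))) := by
  show L.abs _ = _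
  rw [L.wk_eq_wk0, L.wk_eq_wk0]

end LamTh

def myFobj (L : LamTh) (A : {A : L.T 0 // L.IsRObj A}) : Pshf L where
  P := fun n => {t : L.T n // L.appT (L.wk0 A.1) t = t}
  act := fun p h => ⟨L.subst p.1 h, L.mem_act A.1 p.1 p.2 h⟩
  act_id := fun p => Subtype.ext (L.subst_id p.1)
  act_assoc := fun p f g => Subtype.ext (L.subst_assoc p.1 f g)

def myFhom (L : LamTh) (A B : {A : L.T 0 // L.IsRObj A})
    (f : {f : L.T 0 // L.IsRMor A.1 B.1 f}) : myFobj L A ⟶ myFobj L B where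
  map := fun n p => ⟨L.appT (L.wk0 f.1) p.1, by
    conv_lhs => rw [← L.comp_app, f.2.1]⟩
  comm := fun p h => Subtype.ext (by
    show L.appT (L.wk0 f.1) (L.subst p.1 h) = L.subst (L.appT (L.wk0 f.1) p.1) h
    rw [L.subst_app, L.subst_wk0])

/-- Let `L` be a λ-theory satisfying β-equality.  There is a
fully faithful functor `F` from the category of retracts `R` of `L` to the
category `Pshf L` of `L`-presheaves such that `F(U)` is isomorphic to the
theory presheaf `L`, where `U = λx₁.x₁` is the reflexive object of `R`.
(`F` arises as the composite of the equivalence `R ≃ Karoubi(𝐌M₁)` induced by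
the monoid isomorphism `ρ/λ` between the η-terms of `L₀` and `L₁`, the
embedding of the Karoubi envelope into presheaves on `𝐌M₁` as retracts of
representables, and the equivalence of presheaves on `𝐌M₁` with `Pshf L`.)
Here `R` is described concretely: its objects are the `A ∈ L₀` with
`A ∘ A = A`, its morphisms `A → B` the `f ∈ L₀` with `B ∘ f = f = f ∘ A`, with
identity `A` on `A` and composition `∘`; a fully faithful functor out of it is
given by an object map together with bijections on hom-sets preserving
identities and composition. -/
theorem R_embeds_in_presheaves (L : LamTh) :
    ∃ (Fobj : {A : L.T 0 // L.IsRObj A} → Pshf L)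
      (Fhom : ∀ A B : {A : L.T 0 // L.IsRObj A},
        {f : L.T 0 // L.IsRMor A.1 B.1 f} → (Fobj A ⟶ Fobj B)),
      -- `F` is fully faithful
      (∀ A B, Function.Bijective (Fhom A B)) ∧
      -- `F` preserves identities (recall `id_A = A` in `R`)
      (∀ A, Fhom A A ⟨A.1, A.2, A.2⟩ = 𝟙 (Fobj A)) ∧
      -- `F` preserves composition
      (∀ (A B C : {A : L.T 0 // L.IsRObj A})
          (f : {f : L.T 0 // L.IsRMor A.1 B.1 f})
          (g : {g : L.T 0 // L.IsRMor B.1 C.1 g})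
          (h : {h : L.T 0 // L.IsRMor A.1 C.1 h}),
        h.1 = L.comp g.1 f.1 → Fhom A C h = Fhom A B f ≫ Fhom B C g) ∧
      -- `F(U)` is isomorphic to the theory presheaf
      ∀ hU : L.IsRObj L.UU, Nonempty (Fobj ⟨L.UU, hU⟩ ≅ theoryPshf L) := by
  refine ⟨myFobj L, myFhom L, ?_, ?_, ?_, ?_⟩
  · -- fully faithful
    intro A B
    constructor
    · -- injective
      intro f g hfg
      have hmap : ∀ n (p : (myFobj L A).P n),
          L.appT (L.wk0 f.1) p.1 = L.appT (L.wk0 g.1) p.1 := by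
        intro n p
        have := congrArg (fun φ : myFobj L A ⟶ myFobj L B => (φ.map n p).1) hfg
        exact this
      -- the "generic element" of F(A) at level 1
      have hA : L.appT (L.wk0 A.1) (L.appT (L.wk0 A.1) (L.xv 1 0)) =
          L.appT (L.wk0 A.1) (L.xv 1 0) := by
        rw [← L.comp_app, A.2]
      have h1 := hmap 1 ⟨L.appT (L.wk0 A.1) (L.xv 1 0), hA⟩
      have hf : L.appT (L.wk0 f.1) (L.appT (L.wk0 A.1) (L.xv 1 0)) =
          L.appT (L.wk0 f.1) (L.xv 1 0) := by rw [← L.comp_app, f.2.2]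
      have hg : L.appT (L.wk0 g.1) (L.appT (L.wk0 A.1) (L.xv 1 0)) =
          L.appT (L.wk0 g.1) (L.xv 1 0) := by rw [← L.comp_app, g.2.2]
      have hx : L.appT (L.wk0 f.1) (L.xv 1 0) = L.appT (L.wk0 g.1) (L.xv 1 0) := by
        rw [← hf, ← hg]; exact h1
      apply Subtype.ext
      have hlast : (Fin.last 0 : Fin 1) = 0 := rfl
      calc f.1 = L.comp B.1 f.1 := f.2.1.symm
        _ = L.abs (L.appT (L.wk0 B.1) (L.appT (L.wk0 f.1) (L.xv 1 (Fin.last 0)))) :=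
            L.comp_eq_abs B.1 f.1
        _ = L.abs (L.appT (L.wk0 B.1) (L.appT (L.wk0 g.1) (L.xv 1 (Fin.last 0)))) := by
            rw [hlast, hx]
        _ = L.comp B.1 g.1 := (L.comp_eq_abs B.1 g.1).symm
        _ = g.1 := g.2.1
    · -- surjective
      intro φ
      have hlast : (Fin.last 0 : Fin 1) = 0 := rfl
      have hA : L.appT (L.wk0 A.1) (L.appT (L.wk0 A.1) (L.xv 1 0)) =
          L.appT (L.wk0 A.1) (L.xv 1 0) := by rw [← L.comp_app, A.2]
      set e : (myFobj L A).P 1 := ⟨L.appT (L.wk0 A.1) (L.xv 1 0), hA⟩ with he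
      set s : L.T 1 := (φ.map 1 e).1 with hs
      have hBs : L.appT (L.wk0 B.1) s = s := (φ.map 1 e).2
      -- key: φ is given by substitution into s
      have key : ∀ n (p : (myFobj L A).P n), (φ.map n p).1 = L.subst s ![p.1] := by
        intro n p
        have hact : (myFobj L A).act e ![p.1] = p := by
          apply Subtype.ext
          show L.subst (L.appT (L.wk0 A.1) (L.xv 1 0)) ![p.1] = p.1
          rw [L.subst_app, L.subst_wk0, L.subst_xv]
          show L.appT (L.wk0 A.1) p.1 = p.1
          exact p.2
        have := φ.comm e ![p.1]
        rw [hact] at this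
        rw [this]
        rfl
      have hsx : L.subst s ![L.xv 1 0] = s := by
        have : (![L.xv 1 0] : Fin 1 → L.T 1) = L.xv 1 :=
          LamTh.fin1_eq _ _ rfl
        rw [this, L.subst_id]
      have hse : L.subst s ![e.1] = s := (key 1 e).symm
      -- f := abs s
      refine ⟨⟨L.abs s, ?_, ?_⟩, ?_⟩
      · -- B ∘ (abs s) = abs s
        rw [L.comp_eq_abs, hlast, L.app_abs, hsx, hBs]
      · -- (abs s) ∘ A = abs s
        rw [L.comp_eq_abs, hlast, L.app_abs]
        show L.abs (L.subst s ![e.1]) = L.abs s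
        rw [hse]
      · -- myFhom agrees with φ
        apply PshfHom.ext'
        funext n p
        apply Subtype.ext
        show L.appT (L.wk0 (L.abs s)) p.1 = (φ.map n p).1
        rw [L.app_abs, key]
  · -- identities
    intro A
    apply PshfHom.ext'
    funext n p
    exact Subtype.ext p.2
  · -- composition
    intro A B C f g h hh
    apply PshfHom.ext'
    funext n p
    apply Subtype.ext
    show L.appT (L.wk0 h.1) p.1 = L.appT (L.wk0 g.1) (L.appT (L.wk0 f.1) p.1)
    rw [hh, L.comp_app]
  · -- F(U) ≅ theory presheaf
    intro hU
    have hUall : ∀ n (t : L.T n), L.appT (L.wk0 L.UU) t = t := by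
      intro n t
      show L.appT (L.wk0 (L.abs (L.xv 1 0))) t = t
      rw [L.app_abs, L.subst_xv]
      simp
    exact ⟨{
      hom := ⟨fun n p => p.1, fun p t => rfl⟩
      inv := ⟨fun n t => ⟨t, hUall n t⟩, fun p t => Subtype.ext rfl⟩
      hom_inv_id := PshfHom.ext' (by funext n p; exact Subtype.ext rfl)
      inv_hom_id := PshfHom.ext' rfl }⟩
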